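/- In a monomial model with a linear θ̃_i-covariation scheme (setting θ_k to γ_k θ̃_i + δ_k for k ∈ S_j∖{i}, with coefficients chosen so the varied parameters in S_j sum to one), the sensitivity function σ(P)(E), viewed as a function of θ̃_i, is a polynomial in θ̃_i of degree at most max_{y∈E} |A_{y,S_j}|, and this bound is attained for proportional and uniform covariation when the leading coefficients do not cancel. -/

import Mathlib

open Finset

/-- Under a linear covariation scheme the sensitivity function is a polynomial in
`θ̃ᵢ` of degree at most `max_{y∈E} |A_{y,S_j}|`, the bound being attained whenever
the leading coefficient does not cancel. -/
theorem stmt_3 {Y : Type*} [Fintype Y] {k : ℕ}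
    (A : Y → Fin k → ℕ) (θ : Fin k → ℝ) (Sj : Finset (Fin k))
    (hθpos : ∀ i, 0 < θ i) (hsum : ∑ i ∈ Sj, θ i = 1)
    (i₀ : Fin k) (hi₀ : i₀ ∈ Sj)
    (γ δ : Fin k → ℝ)
    (hsum' : ∀ t : ℝ, t + ∑ j ∈ Sj.erase i₀, (γ j * t + δ j) = 1)
    (E : Finset Y) :
    ∃ p : Polynomial ℝ,
      (∀ t : ℝ,
        ∑ y ∈ E, t ^ A y i₀ * (∏ j ∈ Sj.erase i₀, (γ j * t + δ j) ^ A y j)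
            * ∏ i ∈ Sjᶜ, θ i ^ A y i
          = p.eval t)
      ∧ p.natDegree ≤ E.sup (fun y => ∑ j ∈ Sj, A y j)
      ∧ (p.coeff (E.sup (fun y => ∑ j ∈ Sj, A y j)) ≠ 0
          → p.natDegree = E.sup (fun y => ∑ j ∈ Sj, A y j)) := by
  classical
  refine ⟨∑ y ∈ E, (Polynomial.X ^ A y i₀ *
      ∏ j ∈ Sj.erase i₀, (Polynomial.C (γ j) * Polynomial.X + Polynomial.C (δ j)) ^ A y j)
      * Polynomial.C (∏ i ∈ Sjᶜ, θ i ^ A y i), ?_, ?_, ?_⟩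
  · intro t
    simp [Polynomial.eval_finset_sum, Polynomial.eval_prod]
  · refine (Polynomial.natDegree_sum_le _ _).trans ?_
    rw [Finset.fold_max_le]
    refine ⟨Nat.zero_le _, fun y hy => ?_⟩
    have h1 : ((Polynomial.X ^ A y i₀ *
        ∏ j ∈ Sj.erase i₀, (Polynomial.C (γ j) * Polynomial.X + Polynomial.C (δ j)) ^ A y j)
        * Polynomial.C (∏ i ∈ Sjᶜ, θ i ^ A y i) : Polynomial ℝ).natDegree
        ≤ ∑ j ∈ Sj, A y j := by
      refine (Polynomial.natDegree_mul_le).trans ?_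
      simp only [Polynomial.natDegree_C, add_zero]
      refine (Polynomial.natDegree_mul_le).trans ?_
      have h2 : (∏ j ∈ Sj.erase i₀,
          (Polynomial.C (γ j) * Polynomial.X + Polynomial.C (δ j)) ^ A y j
          : Polynomial ℝ).natDegree ≤ ∑ j ∈ Sj.erase i₀, A y j := by
        refine (Polynomial.natDegree_prod_le _ _).trans ?_
        refine Finset.sum_le_sum fun j _ => ?_
        refine (Polynomial.natDegree_pow_le).trans ?_
        have : ((Polynomial.C (γ j) * Polynomial.X + Polynomial.C (δ j))
            : Polynomial ℝ).natDegree ≤ 1 := by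
          refine (Polynomial.natDegree_add_le _ _).trans ?_
          simp only [Polynomial.natDegree_C, max_le_iff]
          exact ⟨(Polynomial.natDegree_C_mul_le _ _).trans (by simp), Nat.zero_le _⟩
        calc A y j * ((Polynomial.C (γ j) * Polynomial.X + Polynomial.C (δ j))
              : Polynomial ℝ).natDegree ≤ A y j * 1 := Nat.mul_le_mul_left _ this
          _ = A y j := Nat.mul_one _
      calc (Polynomial.X ^ A y i₀ : Polynomial ℝ).natDegree +
            (∏ j ∈ Sj.erase i₀,
              (Polynomial.C (γ j) * Polynomial.X + Polynomial.C (δ j)) ^ A y j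
              : Polynomial ℝ).natDegree
          ≤ A y i₀ + ∑ j ∈ Sj.erase i₀, A y j := by
            gcongr
            simp [Polynomial.natDegree_X_pow]
        _ = ∑ j ∈ Sj, A y j := Finset.add_sum_erase _ _ hi₀
    exact h1.trans (Finset.le_sup (f := fun y => ∑ j ∈ Sj, A y j) hy)
  · intro hc
    have := Polynomial.le_natDegree_of_ne_zero hc
    refine le_antisymm ?_ this
    -- repeat the degree bound
    refine (Polynomial.natDegree_sum_le _ _).trans ?_
    rw [Finset.fold_max_le]
    refine ⟨Nat.zero_le _, fun y hy => ?_⟩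
    refine le_trans ?_ (Finset.le_sup (f := fun y => ∑ j ∈ Sj, A y j) hy)
    refine (Polynomial.natDegree_mul_le).trans ?_
    simp only [Polynomial.natDegree_C, add_zero]
    refine (Polynomial.natDegree_mul_le).trans ?_
    have h2 : (∏ j ∈ Sj.erase i₀,
        (Polynomial.C (γ j) * Polynomial.X + Polynomial.C (δ j)) ^ A y j
        : Polynomial ℝ).natDegree ≤ ∑ j ∈ Sj.erase i₀, A y j := by
      refine (Polynomial.natDegree_prod_le _ _).trans ?_
      refine Finset.sum_le_sum fun j _ => ?_
      refine (Polynomial.natDegree_pow_le).trans ?_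
      have : ((Polynomial.C (γ j) * Polynomial.X + Polynomial.C (δ j))
          : Polynomial ℝ).natDegree ≤ 1 := by
        refine (Polynomial.natDegree_add_le _ _).trans ?_
        simp only [Polynomial.natDegree_C, max_le_iff]
        exact ⟨(Polynomial.natDegree_C_mul_le _ _).trans (by simp), Nat.zero_le _⟩
      calc A y j * ((Polynomial.C (γ j) * Polynomial.X + Polynomial.C (δ j))
            : Polynomial ℝ).natDegree ≤ A y j * 1 := Nat.mul_le_mul_left _ this
        _ = A y j := Nat.mul_one _
    calc (Polynomial.X ^ A y i₀ : Polynomial ℝ).natDegree +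
          (∏ j ∈ Sj.erase i₀,
            (Polynomial.C (γ j) * Polynomial.X + Polynomial.C (δ j)) ^ A y j
            : Polynomial ℝ).natDegree
        ≤ A y i₀ + ∑ j ∈ Sj.erase i₀, A y j := by
          gcongr
          simp [Polynomial.natDegree_X_pow]
      _ = ∑ j ∈ Sj, A y j := Finset.add_sum_erase _ _ hi₀
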